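/- With F = GF(q), α_{ij} ∈ F, β_i : F → F with β_i(0) = 0, r(x) = Σ α_{ij}x_i x_j + Σ β_i(x_i), and M = {((x_i,y_i))_i : Σ x_i = 0, Σ y_i + r(x) = 0}: for any ((a_i,b_i))_i ∈ M, the coordinatewise map sending (x_i, y_i) to (x_i − a_i, y_i + x_i Σ_j α_{ij} a_j + x_i Σ_j α_{ji} a_j − β_i(x_i − a_i) + β_i(x_i) − Σ_j α_{ij} a_j a_i) is an autotopism of M mapping ((a_i,b_i))_i to an element of M whose x-components are all 0. -/

import Mathlib

/-- The coordinatewise maps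
`(x,y) ↦ (x - a_i, y + x Σ_j α_{ij} a_j + x Σ_j α_{ji} a_j - β_i(x-a_i) + β_i(x) - Σ_j α_{ij} a_j a_i)`
form an autotopism of the quadratic code `M` sending a codeword `((a_i,b_i))_i`
to a codeword with all `x`-components `0`. -/
theorem quadratic_code_autotopism {p k n : ℕ} (hp : p.Prime)
    {F : Type} [Field F] [Fintype F] [DecidableEq F]
    (hF : Fintype.card F = p ^ k)
    (α : Fin n → Fin n → F) (β : Fin n → F → F) (hβ : ∀ i, β i 0 = 0)
    (M : Set (Fin n → F × F))
    (hM : M = {z : Fin n → F × F |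
      (∑ i, (z i).1) = 0 ∧
      (∑ i, (z i).2) +
        ((∑ i, ∑ j, α i j * (z i).1 * (z j).1) + ∑ i, β i (z i).1) = 0})
    (u : Fin n → F × F) (hu : u ∈ M)
    (σ : Fin n → F × F → F × F)
    (hσ : ∀ i, σ i = fun w =>
      (w.1 - (u i).1,
       w.2 + w.1 * (∑ j, α i j * (u j).1) + w.1 * (∑ j, α j i * (u j).1)
         - β i (w.1 - (u i).1) + β i w.1 - ∑ j, α i j * (u j).1 * (u i).1)) :
    (∀ i, Function.Bijective (σ i)) ∧
    (∀ z, z ∈ M ↔ (fun i => σ i (z i)) ∈ M) ∧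
    (fun i => σ i (u i)) ∈ M ∧
    (∀ i, (σ i (u i)).1 = 0) := by
  subst hM
  obtain ⟨hu1, hu2⟩ := hu
  set a : Fin n → F := fun i => (u i).1 with ha
  -- bijectivity
  have hbij : ∀ i, Function.Bijective (σ i) := by
    intro i
    rw [hσ i]
    refine Function.bijective_iff_has_inverse.mpr ⟨fun w =>
      (w.1 + a i,
       w.2 - ((w.1 + a i) * (∑ j, α i j * a j) + (w.1 + a i) * (∑ j, α j i * a j)
         - β i w.1 + β i (w.1 + a i) - ∑ j, α i j * a j * a i)), ?_, ?_⟩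
    · rintro ⟨x, y⟩
      simp only [ha, sub_add_cancel]
      exact Prod.ext rfl (by ring)
    · rintro ⟨x, y⟩
      simp only [ha, add_sub_cancel_right]
      exact Prod.ext rfl (by ring)
  -- key invariance of the two defining sums
  have key1 : ∀ z : Fin n → F × F, (∑ i, (σ i (z i)).1) = ∑ i, (z i).1 := by
    intro z
    simp only [hσ]
    rw [Finset.sum_sub_distrib]
    rw [show (∑ i, a i) = 0 from hu1, sub_zero]
  have key2 : ∀ z : Fin n → F × F,
      (∑ i, (σ i (z i)).2) +
        ((∑ i, ∑ j, α i j * (σ i (z i)).1 * (σ j (z j)).1) + ∑ i, β i (σ i (z i)).1)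
      = (∑ i, (z i).2) +
        ((∑ i, ∑ j, α i j * (z i).1 * (z j).1) + ∑ i, β i (z i).1) := by
    intro z
    simp only [hσ]
    set x : Fin n → F := fun i => (z i).1 with hx
    -- expand the quadratic form at x - a
    have hQ : (∑ i, ∑ j, α i j * (x i - a i) * (x j - a j))
        = (∑ i, ∑ j, α i j * x i * x j) - (∑ i, ∑ j, α i j * x i * a j)
          - (∑ i, ∑ j, α i j * a i * x j) + ∑ i, ∑ j, α i j * a i * a j := by
      rw [← Finset.sum_sub_distrib, ← Finset.sum_sub_distrib, ← Finset.sum_add_distrib]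
      refine Finset.sum_congr rfl fun i _ => ?_
      rw [← Finset.sum_sub_distrib, ← Finset.sum_sub_distrib, ← Finset.sum_add_distrib]
      exact Finset.sum_congr rfl fun j _ => by ring
    have h1 : (∑ i, x i * ∑ j, α i j * a j) = ∑ i, ∑ j, α i j * x i * a j := by
      refine Finset.sum_congr rfl fun i _ => ?_
      rw [Finset.mul_sum]
      exact Finset.sum_congr rfl fun j _ => by ring
    have h2 : (∑ i, x i * ∑ j, α j i * a j) = ∑ i, ∑ j, α i j * a i * x j := by
      rw [show (∑ i, ∑ j, α i j * a i * x j) = ∑ j, ∑ i, α i j * a i * x j from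
        Finset.sum_comm]
      refine Finset.sum_congr rfl fun i _ => ?_
      rw [Finset.mul_sum]
      exact Finset.sum_congr rfl fun j _ => by ring
    have h3 : (∑ i, ∑ j, α i j * a j * a i) = ∑ i, ∑ j, α i j * a i * a j := by
      refine Finset.sum_congr rfl fun i _ => Finset.sum_congr rfl fun j _ => by ring
    simp only [Finset.sum_add_distrib, Finset.sum_sub_distrib]
    rw [hQ, h1, h2, h3]
    ring
  have hmem : ∀ z, z ∈ {z : Fin n → F × F |
      (∑ i, (z i).1) = 0 ∧
      (∑ i, (z i).2) +
        ((∑ i, ∑ j, α i j * (z i).1 * (z j).1) + ∑ i, β i (z i).1) = 0} ↔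
      (fun i => σ i (z i)) ∈ {z : Fin n → F × F |
      (∑ i, (z i).1) = 0 ∧
      (∑ i, (z i).2) +
        ((∑ i, ∑ j, α i j * (z i).1 * (z j).1) + ∑ i, β i (z i).1) = 0} := by
    intro z
    constructor
    · intro hz
      exact ⟨(key1 z).trans hz.1, (key2 z).trans hz.2⟩
    · intro hz
      exact ⟨(key1 z).symm.trans hz.1, (key2 z).symm.trans hz.2⟩
  exact ⟨hbij, hmem, (hmem u).mp ⟨hu1, hu2⟩, fun i => by rw [hσ i]; simp⟩
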